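/- If g ≠ 0 and τ ∈ (0, 1/λ_max], then for every α ∈ (0,2] one has ⟨g, p(α)⟩ < 0; consequently p(α) ≠ 0 and the dogleg step size τ_α = −‖p(α)‖² / ⟨g, p(α)⟩ is strictly positive. -/

import Mathlib

open scoped RealInnerProductSpace

/-- The dogleg path: `p(α) = -τ g` for `α ∈ (0,1]`, and
`p(α) = -τ g + (α-1)(-Q⁻¹ g + τ g)` for `α ∈ (1,2]`. -/
noncomputable def doglegPath {n : ℕ} (τ : ℝ) (g : EuclideanSpace ℝ (Fin n))
    (Qinv : EuclideanSpace ℝ (Fin n) →ₗ[ℝ] EuclideanSpace ℝ (Fin n)) (α : ℝ) :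
    EuclideanSpace ℝ (Fin n) :=
  if α ≤ 1 then (-τ) • g else (-τ) • g + (α - 1) • (-(Qinv g) + τ • g)

/-- The dogleg step size `τ_α = -‖p(α)‖² / ⟨g, p(α)⟩`. -/
noncomputable def doglegTau {n : ℕ} (τ : ℝ) (g : EuclideanSpace ℝ (Fin n))
    (Qinv : EuclideanSpace ℝ (Fin n) →ₗ[ℝ] EuclideanSpace ℝ (Fin n)) (α : ℝ) : ℝ :=
  -‖doglegPath τ g Qinv α‖ ^ 2 / ⟪g, doglegPath τ g Qinv α⟫

/-- `g_α = (⟨g, p(α)⟩ / ‖p(α)‖²) p(α)`. -/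
noncomputable def doglegG {n : ℕ} (τ : ℝ) (g : EuclideanSpace ℝ (Fin n))
    (Qinv : EuclideanSpace ℝ (Fin n) →ₗ[ℝ] EuclideanSpace ℝ (Fin n)) (α : ℝ) :
    EuclideanSpace ℝ (Fin n) :=
  (⟪g, doglegPath τ g Qinv α⟫ / ‖doglegPath τ g Qinv α‖ ^ 2) • doglegPath τ g Qinv α

/-- The (shifted) quadratic model `q(x) = ⟨g, x⟩ + (1/2) xᵀ Q x`. -/
noncomputable def quadModel {n : ℕ}
    (Q : EuclideanSpace ℝ (Fin n) →ₗ[ℝ] EuclideanSpace ℝ (Fin n))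
    (g x : EuclideanSpace ℝ (Fin n)) : ℝ :=
  ⟪g, x⟫ + (1 / 2) * ⟪Q x, x⟫

/-- The surrogate `m_α(x) = ⟨g_α, x⟩ + (1/(2 τ_α)) ‖x‖²`. -/
noncomputable def doglegSurrogate {n : ℕ} (τ : ℝ) (g : EuclideanSpace ℝ (Fin n))
    (Qinv : EuclideanSpace ℝ (Fin n) →ₗ[ℝ] EuclideanSpace ℝ (Fin n)) (α : ℝ)
    (x : EuclideanSpace ℝ (Fin n)) : ℝ :=
  ⟪doglegG τ g Qinv α, x⟫ + (1 / (2 * doglegTau τ g Qinv α)) * ‖x‖ ^ 2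
/-- If `g ≠ 0` and `τ ∈ (0, 1/λ_max]`, then for every `α ∈ (0,2]` one has
`⟨g, p(α)⟩ < 0`; consequently `p(α) ≠ 0` and the dogleg step size
`τ_α = -‖p(α)‖² / ⟨g, p(α)⟩` is strictly positive. -/

private lemma bilin_cauchy_schwarz {n : ℕ}
    (Q : EuclideanSpace ℝ (Fin n) →ₗ[ℝ] EuclideanSpace ℝ (Fin n))
    (hQsymm : ∀ x y : EuclideanSpace ℝ (Fin n), ⟪Q x, y⟫ = ⟪x, Q y⟫)
    (hQpos : ∀ x : EuclideanSpace ℝ (Fin n), 0 ≤ ⟪Q x, x⟫)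
    (u v : EuclideanSpace ℝ (Fin n)) :
    ⟪Q u, v⟫ ^ 2 ≤ ⟪Q u, u⟫ * ⟪Q v, v⟫ := by
  have key : ∀ t : ℝ, 0 ≤ ⟪Q v, v⟫ * (t * t) + (2 * ⟪Q u, v⟫) * t + ⟪Q u, u⟫ := by
    intro t
    have h := hQpos (u + t • v)
    have hexp : ⟪Q (u + t • v), u + t • v⟫
        = ⟪Q v, v⟫ * (t * t) + (2 * ⟪Q u, v⟫) * t + ⟪Q u, u⟫ := by
      have hsym : ⟪Q v, u⟫ = ⟪Q u, v⟫ := by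
        rw [hQsymm v u, real_inner_comm]
      simp only [map_add, map_smul, inner_add_left, inner_add_right,
        real_inner_smul_left, real_inner_smul_right, hsym]
      ring
    rw [hexp] at h; linarith
  have hd := discrim_le_zero key
  have : discrim ⟪Q v, v⟫ (2 * ⟪Q u, v⟫) ⟪Q u, u⟫
      = 4 * (⟪Q u, v⟫ ^ 2 - ⟪Q u, u⟫ * ⟪Q v, v⟫) := by
    unfold discrim; ring
  rw [this] at hd; nlinarith

theorem dogleg_negative_inner_and_positive_tau {n : ℕ}
    (Q Qinv : EuclideanSpace ℝ (Fin n) →ₗ[ℝ] EuclideanSpace ℝ (Fin n))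
    (hQsymm : ∀ x y : EuclideanSpace ℝ (Fin n), ⟪Q x, y⟫ = ⟪x, Q y⟫)
    (hQpd : ∀ x : EuclideanSpace ℝ (Fin n), x ≠ 0 → 0 < ⟪Q x, x⟫)
    (hinv₁ : ∀ x, Q (Qinv x) = x) (hinv₂ : ∀ x, Qinv (Q x) = x)
    (lamMax lamMin : ℝ) (hlamMaxPos : 0 < lamMax) (hlamMinPos : 0 < lamMin)
    (hRayleighMax : ∀ x : EuclideanSpace ℝ (Fin n), ⟪Q x, x⟫ ≤ lamMax * ‖x‖ ^ 2)
    (hRayleighMin : ∀ x : EuclideanSpace ℝ (Fin n), lamMin * ‖x‖ ^ 2 ≤ ⟪Q x, x⟫)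
    (g : EuclideanSpace ℝ (Fin n)) (hg : g ≠ 0) (τ : ℝ)
    (hτpos : 0 < τ) (hτle : τ ≤ 1 / lamMax)
    (α : ℝ) (hα₀ : 0 < α) (hα₂ : α ≤ 2) :
    ⟪g, doglegPath τ g Qinv α⟫ < 0 ∧ doglegPath τ g Qinv α ≠ 0 ∧
      0 < doglegTau τ g Qinv α := by
  have hgg : (0:ℝ) < ‖g‖ ^ 2 := pow_pos (norm_pos_iff.mpr hg) 2
  set y := Qinv g with hy
  have hQy : Q y = g := hinv₁ g
  have hQpos : ∀ x : EuclideanSpace ℝ (Fin n), 0 ≤ ⟪Q x, x⟫ := by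
    intro x
    by_cases hx : x = 0
    · simp [hx]
    · exact (hQpd x hx).le
  -- ⟪g, y⟫ ≥ τ ‖g‖²
  have hgy : τ * ‖g‖ ^ 2 ≤ ⟪g, y⟫ := by
    have hcs := bilin_cauchy_schwarz Q hQsymm hQpos y (Q y)
    have h1 : ⟪Q y, Q y⟫ = ‖g‖ ^ 2 := by
      rw [hQy, real_inner_self_eq_norm_sq]
    have h2 : ⟪Q (Q y), Q y⟫ ≤ lamMax * ‖g‖ ^ 2 := by
      rw [hQy]; exact hRayleighMax g
    have h3 : ⟪g, y⟫ = ⟪Q y, y⟫ := by rw [hQy]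
    have hQyy : 0 ≤ ⟪Q y, y⟫ := hQpos y
    -- (‖g‖²)² ≤ ⟪Q y, y⟫ * (lamMax * ‖g‖²)
    have h4 : (‖g‖ ^ 2) ^ 2 ≤ ⟪Q y, y⟫ * (lamMax * ‖g‖ ^ 2) := by
      calc (‖g‖ ^ 2) ^ 2 = ⟪Q y, Q y⟫ ^ 2 := by rw [h1]
        _ ≤ ⟪Q y, y⟫ * ⟪Q (Q y), Q y⟫ := hcs
        _ ≤ ⟪Q y, y⟫ * (lamMax * ‖g‖ ^ 2) :=
            mul_le_mul_of_nonneg_left h2 hQyy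
    have h5 : ‖g‖ ^ 2 ≤ lamMax * ⟪Q y, y⟫ := by
      have := (mul_le_mul_iff_left₀ hgg).mp (by nlinarith : ‖g‖ ^ 2 * ‖g‖ ^ 2 ≤ (lamMax * ⟪Q y, y⟫) * ‖g‖ ^ 2)
      linarith
    have hτ' : τ * lamMax ≤ 1 := by
      rw [le_div_iff₀ hlamMaxPos] at hτle; linarith
    rw [h3]
    nlinarith [hQpos y]
  have hinner : ⟪g, doglegPath τ g Qinv α⟫ < 0 := by
    unfold doglegPath
    by_cases h1 : α ≤ 1
    · simp only [h1, if_true, real_inner_smul_right, real_inner_self_eq_norm_sq]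
      nlinarith
    · simp only [h1, if_false, inner_add_right, real_inner_smul_right,
        inner_add_right, inner_neg_right, real_inner_self_eq_norm_sq]
      push_neg at h1
      have hα1 : 0 < α - 1 := by linarith
      have : (α - 1) * (-⟪g, y⟫ + τ * ‖g‖ ^ 2) ≤ 0 := by nlinarith
      nlinarith
  refine ⟨hinner, ?_, ?_⟩
  · intro hp
    rw [hp, inner_zero_right] at hinner
    exact lt_irrefl 0 hinner
  · unfold doglegTau
    apply div_pos_of_neg_of_neg
    · have hne : doglegPath τ g Qinv α ≠ 0 := by
        intro hp; rw [hp, inner_zero_right] at hinner; exact lt_irrefl 0 hinner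
      have : (0:ℝ) < ‖doglegPath τ g Qinv α‖ ^ 2 := pow_pos (norm_pos_iff.mpr hne) 2
      linarith
    · exact hinner
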